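/- Let R₀ ⊆ R be rings. Suppose there exist rings {S_i}_{i∈I} and pairs of ring homomorphisms ψ_i^{(1)}, ψ_i^{(2)} : R → S_i such that R₀ = {r ∈ R : ψ_i^{(1)}(r) = ψ_i^{(2)}(r) for all i}. Then there exists a ring S ⊇ R and an automorphism σ of S with σ² = id such that R₀ = {r ∈ R : σ(r) = r}. -/

import Mathlib

/-- If `R₀` is the joint equalizer of pairs of ring homomorphisms `ψᵢ⁽¹⁾, ψᵢ⁽²⁾ : R → Sᵢ`,
then there is a ring `T ⊇ R` (via an injective ring homomorphism) and an automorphism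
`σ` of `T` with `σ² = id` such that `R₀ = {r ∈ R : σ(r) = r}`. -/
theorem equalizer_eq_fixed_of_involution
    {R : Type u} [Ring R] {I : Type v} (Sf : I → Type w) [∀ i, Ring (Sf i)]
    (ψ₁ ψ₂ : ∀ i, R →+* Sf i) :
    ∃ (T : RingCat.{max u v w}) (f : R →+* T) (σ : T ≃+* T),
      Function.Injective f ∧
      σ.trans σ = RingEquiv.refl T ∧
      ∀ r : R, (∀ i, ψ₁ i r = ψ₂ i r) ↔ σ (f r) = f r := by
  refine ⟨RingCat.of (R × ∀ i, Sf i × Sf i),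
    RingHom.prod (RingHom.id R)
      (Pi.ringHom fun i => RingHom.prod (ψ₁ i) (ψ₂ i)),
    RingEquiv.prodCongr (RingEquiv.refl R)
      (RingEquiv.piCongrRight fun i => RingEquiv.prodComm), ?_, ?_, ?_⟩
  · intro a b h
    exact congrArg Prod.fst h
  · ext x
    · rfl
    · rfl
    · rfl
  · intro r
    constructor
    · intro h
      refine Prod.ext rfl (funext fun i => Prod.ext ?_ ?_)
      · exact (h i).symm
      · exact h i
    · intro h i
      have h1 := congrFun (congrArg Prod.snd h) i
      exact (congrArg Prod.fst h1).symm
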